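/- With Γ = Γ(γ̃, θ̃, x, y) the 4×4 complex matrix defined below (depending also on the fixed data γ, θ, Λ, N, N_t), the entrywise real part Re Γ satisfies: det(Re Γ(γ̃, θ̃, x, y)) → 0 as (γ̃, θ̃, x, y) → (γ, θ, 0, 0); moreover, at the limit point (γ̃, θ̃, x, y) = (γ, θ, 0, 0) the third and fourth rows of Re Γ coincide with its first and second rows, so Re Γ(γ, θ, 0, 0) has rank at most 2 and determinant 0. -/

import Mathlib

open Real

noncomputable section

/-- `O₁ = N(N−1)(2N−1)/6`. -/
def O₁ (N : ℕ) : ℝ := (N : ℝ) * ((N : ℝ) - 1) * (2 * (N : ℝ) - 1) / 6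
/-- `O₂ = N(N−1)/2`. -/
def O₂ (N : ℕ) : ℝ := (N : ℝ) * ((N : ℝ) - 1) / 2
/-- `O₃ = (N_t−1)/2`. -/
def O₃ (Nt : ℕ) : ℝ := ((Nt : ℝ) - 1) / 2
/-- `O₄ = (N_t−1)(2N_t−1)/6`. -/
def O₄ (Nt : ℕ) : ℝ := ((Nt : ℝ) - 1) * (2 * (Nt : ℝ) - 1) / 6
/-- `O₅ = N`. -/
def O₅ (N : ℕ) : ℝ := (N : ℝ)
/-- `O₆ = 1`. -/
def O₆ (Nt : ℕ) : ℝ := 1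

/-- `M₁(y) = Σ_{n<N} n² e^{−2πiny}`. -/
def M₁ (N : ℕ) (y : ℝ) : ℂ :=
  ∑ n ∈ Finset.range N, (n : ℂ) ^ 2 * Complex.exp (-(2 * (π : ℂ) * Complex.I * n * y))
/-- `M₂(y) = Σ_{n<N} n e^{−2πiny}`. -/
def M₂ (N : ℕ) (y : ℝ) : ℂ :=
  ∑ n ∈ Finset.range N, (n : ℂ) * Complex.exp (-(2 * (π : ℂ) * Complex.I * n * y))
/-- `M₃(x) = (1/N_t) Σ_{m<N_t} m e^{2πimx}`. -/
def M₃ (Nt : ℕ) (x : ℝ) : ℂ :=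
  (Nt : ℂ)⁻¹ * ∑ m ∈ Finset.range Nt, (m : ℂ) * Complex.exp (2 * (π : ℂ) * Complex.I * m * x)
/-- `M₄(x) = (1/N_t) Σ_{m<N_t} m² e^{2πimx}`. -/
def M₄ (Nt : ℕ) (x : ℝ) : ℂ :=
  (Nt : ℂ)⁻¹ * ∑ m ∈ Finset.range Nt, (m : ℂ) ^ 2 * Complex.exp (2 * (π : ℂ) * Complex.I * m * x)
/-- `M₅(y) = Σ_{n<N} e^{−2πiny}`. -/
def M₅ (N : ℕ) (y : ℝ) : ℂ :=
  ∑ n ∈ Finset.range N, Complex.exp (-(2 * (π : ℂ) * Complex.I * n * y))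
/-- `M₆(x) = (1/N_t) Σ_{m<N_t} e^{2πimx}`. -/
def M₆ (Nt : ℕ) (x : ℝ) : ℂ :=
  (Nt : ℂ)⁻¹ * ∑ m ∈ Finset.range Nt, Complex.exp (2 * (π : ℂ) * Complex.I * m * x)

/-- The 4×4 matrix `Γ(γ̃, θ̃, x, y)` of Equation (22) of the paper (depending on the
fixed data `N`, `N_t`, `Λ`, `γ`, `θ`), whose scaled entrywise real part is the
asymptotic Fisher information matrix `J̆^{(ζ_k)}` of the TOA–AOD parameters of one
true path and its fake copy. -/
def Γmat (N Nt : ℕ) (Λ : ℝ) (γ : ℂ) (θ : ℝ) (γt : ℂ) (θt x y : ℝ) :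
    Matrix (Fin 4) (Fin 4) ℂ :=
  !![((O₁ N * O₆ Nt * ‖γ‖ ^ 2 : ℝ) : ℂ),
     ((-(O₂ N * O₃ Nt * ‖γ‖ ^ 2 * Real.cos θ / Λ) : ℝ) : ℂ),
     M₁ N y * M₆ Nt x * (starRingEnd ℂ) γ * γt,
     -(M₂ N y * M₃ Nt x * (starRingEnd ℂ) γ * γt * ((Real.cos θt : ℝ) : ℂ) / ((Λ : ℝ) : ℂ));
     ((-(O₂ N * O₃ Nt * ‖γ‖ ^ 2 * Real.cos θ / Λ) : ℝ) : ℂ),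
     ((O₄ Nt * O₅ N * ‖γ‖ ^ 2 * Real.cos θ ^ 2 / Λ ^ 2 : ℝ) : ℂ),
     -(M₂ N y * M₃ Nt x * (starRingEnd ℂ) γ * γt * ((Real.cos θ : ℝ) : ℂ) / ((Λ : ℝ) : ℂ)),
     M₄ Nt x * M₅ N y * (starRingEnd ℂ) γ * γt * ((Real.cos θ * Real.cos θt : ℝ) : ℂ) / ((Λ ^ 2 : ℝ) : ℂ);
     (starRingEnd ℂ) (M₁ N y * M₆ Nt x * (starRingEnd ℂ) γ * γt),
     (starRingEnd ℂ) (-(M₂ N y * M₃ Nt x * (starRingEnd ℂ) γ * γt * ((Real.cos θ : ℝ) : ℂ) / ((Λ : ℝ) : ℂ))),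
     ((O₁ N * O₆ Nt * ‖γt‖ ^ 2 : ℝ) : ℂ),
     ((-(O₂ N * O₃ Nt * ‖γt‖ ^ 2 * Real.cos θt / Λ) : ℝ) : ℂ);
     (starRingEnd ℂ) (-(M₂ N y * M₃ Nt x * (starRingEnd ℂ) γ * γt * ((Real.cos θt : ℝ) : ℂ) / ((Λ : ℝ) : ℂ))),
     (starRingEnd ℂ) (M₄ Nt x * M₅ N y * (starRingEnd ℂ) γ * γt * ((Real.cos θ * Real.cos θt : ℝ) : ℂ) / ((Λ ^ 2 : ℝ) : ℂ)),
     ((-(O₂ N * O₃ Nt * ‖γt‖ ^ 2 * Real.cos θt / Λ) : ℝ) : ℂ),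
     ((O₄ Nt * O₅ N * ‖γt‖ ^ 2 * Real.cos θt ^ 2 / Λ ^ 2 : ℝ) : ℂ)]


section Aux

lemma sum_range_cast (N : ℕ) :
    ∑ n ∈ Finset.range N, (n : ℂ) = (N : ℂ) * ((N : ℂ) - 1) / 2 := by
  induction N with
  | zero => simp
  | succ n ih => rw [Finset.sum_range_succ, ih]; push_cast; ring

lemma sum_range_sq_cast (N : ℕ) :
    ∑ n ∈ Finset.range N, (n : ℂ) ^ 2
      = (N : ℂ) * ((N : ℂ) - 1) * (2 * (N : ℂ) - 1) / 6 := by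
  induction N with
  | zero => simp
  | succ n ih => rw [Finset.sum_range_succ, ih]; push_cast; ring

lemma M₁_zero (N : ℕ) : M₁ N 0 = ((O₁ N : ℝ) : ℂ) := by
  simp only [M₁, Complex.ofReal_zero, mul_zero, neg_zero, Complex.exp_zero, mul_one]
  rw [sum_range_sq_cast]; unfold O₁; push_cast; ring

lemma M₂_zero (N : ℕ) : M₂ N 0 = ((O₂ N : ℝ) : ℂ) := by
  simp only [M₂, Complex.ofReal_zero, mul_zero, neg_zero, Complex.exp_zero, mul_one]
  rw [sum_range_cast]; unfold O₂; push_cast; ring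

lemma M₃_zero (Nt : ℕ) (hNt : 1 ≤ Nt) : M₃ Nt 0 = ((O₃ Nt : ℝ) : ℂ) := by
  have h0 : (Nt : ℂ) ≠ 0 := Nat.cast_ne_zero.2 (by omega)
  simp only [M₃, Complex.ofReal_zero, mul_zero, Complex.exp_zero, mul_one]
  rw [sum_range_cast]; unfold O₃; push_cast; field_simp

lemma M₄_zero (Nt : ℕ) (hNt : 1 ≤ Nt) : M₄ Nt 0 = ((O₄ Nt : ℝ) : ℂ) := by
  have h0 : (Nt : ℂ) ≠ 0 := Nat.cast_ne_zero.2 (by omega)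
  simp only [M₄, Complex.ofReal_zero, mul_zero, Complex.exp_zero, mul_one]
  rw [sum_range_sq_cast]; unfold O₄; push_cast; field_simp

lemma M₅_zero (N : ℕ) : M₅ N 0 = ((O₅ N : ℝ) : ℂ) := by
  simp [M₅, O₅]

lemma M₆_zero (Nt : ℕ) (hNt : 1 ≤ Nt) : M₆ Nt 0 = ((O₆ Nt : ℝ) : ℂ) := by
  have h0 : (Nt : ℂ) ≠ 0 := Nat.cast_ne_zero.2 (by omega)
  simp [M₆, O₆, h0]

@[fun_prop] lemma continuous_starRingEnd_complex :
    Continuous fun z : ℂ => (starRingEnd ℂ) z := continuous_star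

@[fun_prop] lemma continuous_M₁ (N : ℕ) : Continuous (M₁ N) := by unfold M₁; fun_prop
@[fun_prop] lemma continuous_M₂ (N : ℕ) : Continuous (M₂ N) := by unfold M₂; fun_prop
@[fun_prop] lemma continuous_M₃ (Nt : ℕ) : Continuous (M₃ Nt) := by unfold M₃; fun_prop
@[fun_prop] lemma continuous_M₄ (Nt : ℕ) : Continuous (M₄ Nt) := by unfold M₄; fun_prop
@[fun_prop] lemma continuous_M₅ (N : ℕ) : Continuous (M₅ N) := by unfold M₅; fun_prop
@[fun_prop] lemma continuous_M₆ (Nt : ℕ) : Continuous (M₆ Nt) := by unfold M₆; fun_prop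

end Aux

/-- **Proposition 2.** The determinant of the entrywise real part of `Γ` tends to `0`
as `(γ̃, θ̃, x, y) → (γ, θ, 0, 0)`; at the limit point the third and fourth rows of
`Re Γ` coincide with the first and second rows, so `Re Γ(γ, θ, 0, 0)` has rank at
most `2` and determinant `0`. -/
theorem asymptotic_fim_tends_to_singular
    (N Nt : ℕ) (hN : 1 ≤ N) (hNt : 1 ≤ Nt) (Λ : ℝ) (hΛ : 0 < Λ)
    (γ : ℂ) (θ : ℝ) (hθ : θ ∈ Set.Ioo (-(π / 2)) (π / 2)) :
    Filter.Tendsto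
      (fun q : ℂ × ℝ × ℝ × ℝ =>
        ((Γmat N Nt Λ γ θ q.1 q.2.1 q.2.2.1 q.2.2.2).map Complex.re).det)
      (nhds (γ, θ, 0, 0)) (nhds 0) ∧
    (∀ j, ((Γmat N Nt Λ γ θ γ θ 0 0).map Complex.re) 2 j
        = ((Γmat N Nt Λ γ θ γ θ 0 0).map Complex.re) 0 j) ∧
    (∀ j, ((Γmat N Nt Λ γ θ γ θ 0 0).map Complex.re) 3 j
        = ((Γmat N Nt Λ γ θ γ θ 0 0).map Complex.re) 1 j) ∧
    ((Γmat N Nt Λ γ θ γ θ 0 0).map Complex.re).rank ≤ 2 ∧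
    ((Γmat N Nt Λ γ θ γ θ 0 0).map Complex.re).det = 0 := by
  set A : Matrix (Fin 4) (Fin 4) ℝ := (Γmat N Nt Λ γ θ γ θ 0 0).map Complex.re with hA
  have hrow2 : ∀ j, A 2 j = A 0 j := by
    intro j
    fin_cases j <;>
      simp [hA, Γmat, M₁_zero, M₂_zero, M₃_zero Nt hNt, M₄_zero Nt hNt, M₅_zero,
        M₆_zero Nt hNt, ← Complex.ofReal_pow, Complex.sq_norm,
        Complex.normSq_apply, O₆, Complex.cos_ofReal_re] <;> ring
  have hrow3 : ∀ j, A 3 j = A 1 j := by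
    intro j
    fin_cases j <;>
      simp [hA, Γmat, M₁_zero, M₂_zero, M₃_zero Nt hNt, M₄_zero Nt hNt, M₅_zero,
        M₆_zero Nt hNt, ← Complex.ofReal_pow, Complex.sq_norm,
        Complex.normSq_apply, O₆, Complex.cos_ofReal_re] <;> ring
  have hdet : A.det = 0 :=
    Matrix.det_zero_of_row_eq (i := 2) (j := 0) (by decide) (funext hrow2)
  have hrank : A.rank ≤ 2 := by
    have hPQ : A = (!![1,0;0,1;1,0;0,1] : Matrix (Fin 4) (Fin 2) ℝ)
        * A.submatrix ![0,1] id := by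
      ext i j
      fin_cases i
      · simp [Matrix.mul_apply, Fin.sum_univ_two, -Matrix.submatrix_cons_row]
      · simp [Matrix.mul_apply, Fin.sum_univ_two, -Matrix.submatrix_cons_row]
      · simpa [Matrix.mul_apply, Fin.sum_univ_two, -Matrix.submatrix_cons_row] using hrow2 j
      · simpa [Matrix.mul_apply, Fin.sum_univ_two, -Matrix.submatrix_cons_row] using hrow3 j
    calc A.rank = ((!![1,0;0,1;1,0;0,1] : Matrix (Fin 4) (Fin 2) ℝ)
            * A.submatrix ![0,1] id).rank := by rw [← hPQ]
      _ ≤ (A.submatrix ![0,1] id).rank := Matrix.rank_mul_le_right _ _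
      _ ≤ 2 := le_trans (Matrix.rank_le_card_height _) (by simp)
  have hcont : Continuous
      (fun q : ℂ × ℝ × ℝ × ℝ =>
        ((Γmat N Nt Λ γ θ q.1 q.2.1 q.2.2.1 q.2.2.2).map Complex.re).det) := by
    apply Continuous.matrix_det
    refine Continuous.matrix_map ?_ Complex.continuous_re
    refine continuous_matrix ?_
    intro i j
    fin_cases i <;> fin_cases j <;>
      · simp only [Γmat, Matrix.cons_val', Matrix.cons_val_zero, Matrix.cons_val_one,
          Matrix.head_cons, Matrix.empty_val', Matrix.cons_val_fin_one,
          Matrix.head_fin_const, Matrix.of_apply, Matrix.cons_val_succ, Fin.isValue,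
          Fin.mk_one, Fin.mk_zero, Matrix.cons_val_two, Matrix.cons_val_three,
          Matrix.tail_cons, Fin.zero_eta, Fin.reduceFinMk]
        fun_prop
  refine ⟨?_, hrow2, hrow3, hrank, hdet⟩
  have := hcont.tendsto (γ, θ, 0, 0)
  simpa [← hA, hdet] using this

end
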